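/- arXiv:2102.12094 — 8 statements merged into one kernel-verified Lean document; each statement's English description precedes it below -/
import Mathlib

section
/- Let 𝓜 be a finite collection of nonempty finite subsets of a finite set of base arms, and let w, l, u be real-valued weight vectors on the base arms with l(e) ≤ w(e) ≤ u(e) for every base arm e. Suppose M ∈ 𝓜 satisfies MinW(M, l) ≥ MinW(M', u) for every M' ∈ 𝓜 that is not a superset of M. Then MinW(M, w) ≥ MinW(M', w) for every M' ∈ 𝓜; consequently, if MinW(·, w) has a unique maximizer M* over 𝓜, then M = M*. -/
/-- The bottleneck value of a super arm `M` under weights `v`: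
`MinW (M, v) = min_{e ∈ M} v e` (defaulting to `0` on the empty set). -/
noncomputable def MinW {α : Type*} (M : Finset α) (v : α → ℝ) : ℝ :=
  if h : M.Nonempty then M.inf' h v else 0

lemma MinW_mono_weights {α : Type*} (M : Finset α) {v v' : α → ℝ}
    (h : ∀ e, v e ≤ v' e) : MinW M v ≤ MinW M v' := by
  unfold MinW
  split
  · next hne => exact Finset.le_inf' hne v' fun e he => (Finset.inf'_le v he).trans (h e)
  · exact le_refl 0

lemma MinW_anti_subset {α : Type*} {M M' : Finset α} (hM : M.Nonempty)
    (h : M ⊆ M') (v : α → ℝ) : MinW M' v ≤ MinW M v := by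
  unfold MinW
  rw [dif_pos hM, dif_pos (hM.mono h)]
  exact Finset.inf'_mono v h hM

theorem stmt_3 {α : Type*} [Fintype α]
    (𝓜 : Finset (Finset α)) (h𝓜 : ∀ M ∈ 𝓜, M.Nonempty)
    (w l u : α → ℝ) (hl : ∀ e, l e ≤ w e) (hu : ∀ e, w e ≤ u e)
    (M : Finset α) (hM : M ∈ 𝓜)
    (hstop : ∀ M' ∈ 𝓜, ¬ M ⊆ M' → MinW M' u ≤ MinW M l) :
    (∀ M' ∈ 𝓜, MinW M' w ≤ MinW M w) ∧
      (∀ Mstar ∈ 𝓜,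
        (∀ M'' ∈ 𝓜, M'' ≠ Mstar → MinW M'' w < MinW Mstar w) → M = Mstar) := by
  have hmain : ∀ M' ∈ 𝓜, MinW M' w ≤ MinW M w := by
    intro M' hM'
    by_cases hsub : M ⊆ M'
    · exact MinW_anti_subset (h𝓜 M hM) hsub w
    · calc MinW M' w ≤ MinW M' u := MinW_mono_weights M' hu
        _ ≤ MinW M l := hstop M' hM' hsub
        _ ≤ MinW M w := MinW_mono_weights M hl
  refine ⟨hmain, fun Mstar hMstar huniq => ?_⟩
  by_contra hne
  exact absurd (hmain Mstar hMstar) (not_le.mpr (huniq M hM hne))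
end

section
/- Let 𝓜 be a finite collection of nonempty finite subsets of base arms, w, l, u weight vectors with l(e) ≤ w(e) ≤ u(e) for every base arm e, and suppose MinW(·, w) has a unique maximizer M* over 𝓜; write OPT = MinW(M*, w). Let M_t ∈ 𝓜 and let B̂ be a set of base arms such that: (a) for every M ∈ 𝓜 that is not a superset of M_t there exists e ∈ B̂ ∩ M with l(e) = MinW(M, l); (b) for every e ∈ B̂ there exists M ∈ 𝓜 not a superset of M_t with e ∈ M and l(e) = MinW(M, l); and (c) u(e) ≤ (MinW(M_t, l) + l(e))/2 for every e ∈ B̂. Assume some member of 𝓜 is not a superset of M_t. Then: (i) M_t = M*; (ii) for every M ∈ 𝓜 that is not a superset of M* there exists e ∈ B̂ ∩ M with w(e) ≤ (OPT + MinW(M, w))/2; and (iii) for every e ∈ B̂ there exists M ∈ 𝓜 not a superset of M* with e ∈ M and w(e) ≤ (OPT + MinW(M, w))/2. -/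
lemma MinW_le_of_mem {α : Type*} {M : Finset α} {e : α} (he : e ∈ M) (v : α → ℝ) :
    MinW M v ≤ v e := by
  have h : M.Nonempty := ⟨e, he⟩
  simp only [MinW, dif_pos h]
  exact Finset.inf'_le v he

lemma MinW_mono_fun {α : Type*} {M : Finset α} (h : M.Nonempty) {v v' : α → ℝ}
    (hv : ∀ e, v e ≤ v' e) : MinW M v ≤ MinW M v' := by
  simp only [MinW, dif_pos h]
  exact Finset.le_inf' h _ fun b hb => le_trans (Finset.inf'_le v hb) (hv b)

lemma MinW_anti_set {α : Type*} {M N : Finset α} (hM : M.Nonempty) (hMN : M ⊆ N)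
    (v : α → ℝ) : MinW N v ≤ MinW M v := by
  have hN : N.Nonempty := hM.mono hMN
  simp only [MinW, dif_pos hM, dif_pos hN]
  exact Finset.le_inf' hM _ fun b hb => Finset.inf'_le v (hMN hb)

theorem stmt_5 {α : Type*} [Fintype α] [DecidableEq α]
    (𝓜 : Finset (Finset α)) (h𝓜 : ∀ M ∈ 𝓜, M.Nonempty)
    (w l u : α → ℝ) (hl : ∀ e, l e ≤ w e) (hu : ∀ e, w e ≤ u e)
    (Mstar : Finset α) (hstar : Mstar ∈ 𝓜)
    (hunique : ∀ M ∈ 𝓜, M ≠ Mstar → MinW M w < MinW Mstar w)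
    (Mt : Finset α) (hMt : Mt ∈ 𝓜)
    (Bhat : Finset α)
    (ha : ∀ M ∈ 𝓜, ¬ Mt ⊆ M → ∃ e ∈ Bhat ∩ M, l e = MinW M l)
    (hb : ∀ e ∈ Bhat, ∃ M ∈ 𝓜, ¬ Mt ⊆ M ∧ e ∈ M ∧ l e = MinW M l)
    (hc : ∀ e ∈ Bhat, u e ≤ (MinW Mt l + l e) / 2)
    (hex : ∃ M ∈ 𝓜, ¬ Mt ⊆ M) :
    Mt = Mstar ∧
      (∀ M ∈ 𝓜, ¬ Mstar ⊆ M →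
        ∃ e ∈ Bhat ∩ M, w e ≤ (MinW Mstar w + MinW M w) / 2) ∧
      (∀ e ∈ Bhat, ∃ M ∈ 𝓜, ¬ Mstar ⊆ M ∧ e ∈ M ∧
        w e ≤ (MinW Mstar w + MinW M w) / 2) := by
  have hMtne : Mt.Nonempty := h𝓜 Mt hMt
  have hStarne : Mstar.Nonempty := h𝓜 Mstar hstar
  -- Step 1: Mt = Mstar
  have hEq : Mt = Mstar := by
    by_contra hne
    have hlt : MinW Mt w < MinW Mstar w := hunique Mt hMt hne
    by_cases hsub : Mt ⊆ Mstar
    · exact absurd (MinW_anti_set hMtne hsub w) (not_le.mpr hlt)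
    · obtain ⟨e, heB, hle⟩ := ha Mstar hstar hsub
      rw [Finset.mem_inter] at heB
      have h1 : MinW Mstar w ≤ w e := MinW_le_of_mem heB.2 w
      have h2 : w e ≤ u e := hu e
      have h3 : u e ≤ (MinW Mt l + l e) / 2 := hc e heB.1
      have h4 : MinW Mt l ≤ MinW Mt w := MinW_mono_fun hMtne hl
      have h5 : l e ≤ MinW Mstar w := hle ▸ MinW_mono_fun hStarne hl
      linarith
  subst hEq
  refine ⟨rfl, ?_, ?_⟩
  · intro M hM hsub
    obtain ⟨e, heB, hle⟩ := ha M hM hsub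
    rw [Finset.mem_inter] at heB
    refine ⟨e, Finset.mem_inter.mpr heB, ?_⟩
    have h2 : w e ≤ u e := hu e
    have h3 : u e ≤ (MinW Mt l + l e) / 2 := hc e heB.1
    have h4 : MinW Mt l ≤ MinW Mt w := MinW_mono_fun hMtne hl
    have h5 : l e ≤ MinW M w := hle ▸ MinW_mono_fun (h𝓜 M hM) hl
    linarith
  · intro e heB
    obtain ⟨M, hM, hsub, heM, hle⟩ := hb e heB
    refine ⟨M, hM, hsub, heM, ?_⟩
    have h2 : w e ≤ u e := hu e
    have h3 : u e ≤ (MinW Mt l + l e) / 2 := hc e heB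
    have h4 : MinW Mt l ≤ MinW Mt w := MinW_mono_fun hMtne hl
    have h5 : l e ≤ MinW M w := hle ▸ MinW_mono_fun (h𝓜 M hM) hl
    linarith
end

section
/- Under the stated setup, every base arm e ∉ A ∪ R with Δ^B_e ≥ Δ satisfies: e ∈ M* if and only if e ∈ M_t. -/
theorem stmt_7 {α : Type*} [Fintype α] [DecidableEq α]
    (𝓜 : Finset (Finset α)) (h𝓜 : ∀ M ∈ 𝓜, M.Nonempty)
    (w : α → ℝ) (Mstar : Finset α) (hstar : Mstar ∈ 𝓜)
    (hunique : ∀ M ∈ 𝓜, M ≠ Mstar → MinW M w < MinW Mstar w)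
    (A R : Finset α) (hA : A ⊆ Mstar) (hR : R ∩ Mstar = ∅)
    (Δ : ℝ) (hΔ : 0 < Δ) (what : α → ℝ)
    (hw1 : ∀ i, i ∉ A ∪ R → |what i - w i| < Δ / 8)
    (hw2 : ∀ i ∈ A, w i ≤ what i)
    (Mt : Finset α) (hMt1 : Mt ∈ 𝓜) (hMt2 : Mt ∩ R = ∅)
    (hMtmax : ∀ M ∈ 𝓜, M ∩ R = ∅ → MinW M what ≤ MinW Mt what)
    (e : α) (he : e ∉ A ∪ R)
    -- `Δ^B_e ≥ Δ` (together with nonemptiness of the collection defining `Δ^B_e`)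
    (hgap1 : e ∈ Mstar →
      (∃ M ∈ 𝓜, e ∉ M) ∧ ∀ M ∈ 𝓜, e ∉ M → MinW M w + Δ ≤ MinW Mstar w)
    (hgap2 : e ∉ Mstar →
      (∃ M ∈ 𝓜, e ∈ M) ∧ ∀ M ∈ 𝓜, e ∈ M → MinW M w + Δ ≤ MinW Mstar w) :
    e ∈ Mstar ↔ e ∈ Mt := by
  have hMsne := h𝓜 Mstar hstar
  have hMtne := h𝓜 Mt hMt1
  have hMstarR : Mstar ∩ R = ∅ := by rwa [Finset.inter_comm] at hR
  have h1 : MinW Mstar w - Δ/8 ≤ MinW Mstar what := by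
    simp only [MinW, dif_pos hMsne]
    apply Finset.le_inf'
    intro i hi
    have hiR : i ∉ R := by
      intro hiR
      have : i ∈ R ∩ Mstar := Finset.mem_inter.2 ⟨hiR, hi⟩
      simp [hR] at this
    have hwle : Mstar.inf' hMsne w ≤ w i := Finset.inf'_le _ hi
    by_cases hiA : i ∈ A
    · have := hw2 i hiA; linarith
    · have h := abs_lt.1 (hw1 i (by simp [hiA, hiR])); linarith [h.1]
  have h2 : MinW Mstar w - Δ/8 ≤ MinW Mt what := le_trans h1 (hMtmax Mstar hstar hMstarR)
  have key : ¬ (MinW Mt w + Δ ≤ MinW Mstar w) := by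
    intro hle
    obtain ⟨i, hiMt, hieq⟩ : ∃ i ∈ Mt, w i = MinW Mt w := by
      rw [MinW, dif_pos hMtne]
      obtain ⟨i, hi, hq⟩ := Finset.exists_mem_eq_inf' hMtne w
      exact ⟨i, hi, hq.symm⟩
    have hiR : i ∉ R := by
      intro hiR; have : i ∈ Mt ∩ R := Finset.mem_inter.2 ⟨hiMt, hiR⟩
      simp [hMt2] at this
    have hiA : i ∉ A := by
      intro hiA
      have : MinW Mstar w ≤ w i := by
        rw [MinW, dif_pos hMsne]; exact Finset.inf'_le _ (hA hiA)
      linarith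
    have habs := abs_lt.1 (hw1 i (by simp [hiA, hiR]))
    have hup : MinW Mt what ≤ what i := by
      rw [MinW, dif_pos hMtne]; exact Finset.inf'_le _ hiMt
    linarith [habs.2]
  constructor
  · intro heMs
    by_contra heMt
    exact key ((hgap1 heMs).2 Mt hMt1 heMt)
  · intro heMt
    by_contra heMs
    exact key ((hgap2 heMs).2 Mt hMt1 heMt)
end

section
/- Under the stated setup, let e ∉ A ∪ R with Δ^B_e ≥ Δ, and let M̃_e be a maximizer of MinW(·, ŵ) over {M ∈ 𝓜_R : e ∉ M} if e ∈ M_t, and over {M ∈ 𝓜_R : e ∈ M} if e ∉ M_t, assuming the respective collection is nonempty. Then MinW(M_t, ŵ) − MinW(M̃_e, ŵ) > (3/4)·Δ. -/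
lemma MinW_le' {α : Type*} {M : Finset α} {i : α} (hi : i ∈ M) (v : α → ℝ) :
    MinW M v ≤ v i := by
  rw [MinW, dif_pos ⟨i, hi⟩]; exact Finset.inf'_le v hi

lemma le_MinW' {α : Type*} {M : Finset α} (h : M.Nonempty) (v : α → ℝ) {c : ℝ}
    (hc : ∀ i ∈ M, c ≤ v i) : c ≤ MinW M v := by
  rw [MinW, dif_pos h]; exact Finset.le_inf' h v hc

lemma exists_MinW' {α : Type*} {M : Finset α} (h : M.Nonempty) (v : α → ℝ) :
    ∃ i ∈ M, MinW M v = v i := by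
  rw [MinW, dif_pos h]; exact Finset.exists_mem_eq_inf' h v

theorem stmt_8 {α : Type*} [Fintype α] [DecidableEq α]
    (𝓜 : Finset (Finset α)) (h𝓜 : ∀ M ∈ 𝓜, M.Nonempty)
    (w : α → ℝ) (Mstar : Finset α) (hstar : Mstar ∈ 𝓜)
    (hunique : ∀ M ∈ 𝓜, M ≠ Mstar → MinW M w < MinW Mstar w)
    (A R : Finset α) (hA : A ⊆ Mstar) (hR : R ∩ Mstar = ∅)
    (Δ : ℝ) (hΔ : 0 < Δ) (what : α → ℝ)
    (hw1 : ∀ i, i ∉ A ∪ R → |what i - w i| < Δ / 8)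
    (hw2 : ∀ i ∈ A, w i ≤ what i)
    (Mt : Finset α) (hMt1 : Mt ∈ 𝓜) (hMt2 : Mt ∩ R = ∅)
    (hMtmax : ∀ M ∈ 𝓜, M ∩ R = ∅ → MinW M what ≤ MinW Mt what)
    (e : α) (he : e ∉ A ∪ R)
    -- `Δ^B_e ≥ Δ` (together with nonemptiness of the collection defining `Δ^B_e`)
    (hgap1 : e ∈ Mstar →
      (∃ M ∈ 𝓜, e ∉ M) ∧ ∀ M ∈ 𝓜, e ∉ M → MinW M w + Δ ≤ MinW Mstar w)
    (hgap2 : e ∉ Mstar →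
      (∃ M ∈ 𝓜, e ∈ M) ∧ ∀ M ∈ 𝓜, e ∈ M → MinW M w + Δ ≤ MinW Mstar w)
    -- `M̃_e` is a maximizer of `MinW (·, ŵ)` over the constrained collection
    (Mte : Finset α) (hMte1 : Mte ∈ 𝓜) (hMte2 : Mte ∩ R = ∅)
    (hMte3 : if e ∈ Mt then e ∉ Mte else e ∈ Mte)
    (hMtemax : ∀ M ∈ 𝓜, M ∩ R = ∅ → (if e ∈ Mt then e ∉ M else e ∈ M) →
      MinW M what ≤ MinW Mte what) :
    MinW Mt what - MinW Mte what > 3 / 4 * Δ := by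
  have hMstarR : Mstar ∩ R = ∅ := by rwa [Finset.inter_comm]
  -- members of A have large weight
  have hAw : ∀ i ∈ A, MinW Mstar w ≤ w i := fun i hi => MinW_le' (hA hi) w
  -- lower bound for sets disjoint from R
  have key_lower : ∀ M ∈ 𝓜, M ∩ R = ∅ → MinW M w - Δ / 8 ≤ MinW M what := by
    intro M hM hMR
    apply le_MinW' (h𝓜 M hM)
    intro i hi
    have hiR : i ∉ R := by
      intro hiR
      have : i ∈ M ∩ R := Finset.mem_inter.mpr ⟨hi, hiR⟩
      simp [hMR] at this
    have hwi : MinW M w ≤ w i := MinW_le' hi w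
    by_cases hiA : i ∈ A
    · have := hw2 i hiA; linarith
    · have : |what i - w i| < Δ / 8 := hw1 i (by simp [hiA, hiR])
      have := abs_lt.mp this
      linarith [this.1]
  have hlow : MinW Mstar w - Δ / 8 ≤ MinW Mt what :=
    le_trans (key_lower Mstar hstar hMstarR) (hMtmax Mstar hstar hMstarR)
  -- upper bound for sets with small true value, disjoint from R
  have key_upper : ∀ M ∈ 𝓜, M ∩ R = ∅ → MinW M w + Δ ≤ MinW Mstar w →
      MinW M what < MinW M w + Δ / 8 := by
    intro M hM hMR hsmall
    obtain ⟨j, hj, hje⟩ := exists_MinW' (h𝓜 M hM) w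
    have hjR : j ∉ R := by
      intro hjR
      have : j ∈ M ∩ R := Finset.mem_inter.mpr ⟨hj, hjR⟩
      simp [hMR] at this
    have hjA : j ∉ A := by
      intro hjA
      have := hAw j hjA
      linarith
    have habs := abs_lt.mp (hw1 j (by simp [hjA, hjR]))
    have : MinW M what ≤ what j := MinW_le' hj what
    linarith [habs.2]
  -- e ∈ Mt ↔ e ∈ Mstar
  have hiff : e ∈ Mt ↔ e ∈ Mstar := by
    constructor
    · intro heMt
      by_contra heMs
      have hg := (hgap2 heMs).2 Mt hMt1 heMt
      have := key_upper Mt hMt1 hMt2 hg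
      linarith
    · intro heMs
      by_contra heMt
      have hg := (hgap1 heMs).2 Mt hMt1 heMt
      have := key_upper Mt hMt1 hMt2 hg
      linarith
  -- conclude: MinW Mte w + Δ ≤ OPT
  have hMteSmall : MinW Mte w + Δ ≤ MinW Mstar w := by
    by_cases heMt : e ∈ Mt
    · have heMte : e ∉ Mte := by simpa [heMt] using hMte3
      exact (hgap1 (hiff.mp heMt)).2 Mte hMte1 heMte
    · have heMte : e ∈ Mte := by simpa [heMt] using hMte3
      have heMs : e ∉ Mstar := fun h => heMt (hiff.mpr h)
      exact (hgap2 heMs).2 Mte hMte1 heMte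
  have := key_upper Mte hMte1 hMte2 hMteSmall
  linarith
end

section
/- Under the stated setup, let p ∉ A ∪ R belong to the symmetric difference of M* and M_t (i.e., p ∈ M* \ M_t or p ∈ M_t \ M*), and let M̃_p be a maximizer of MinW(·, ŵ) over {M ∈ 𝓜_R : p ∉ M} if p ∈ M_t, and over {M ∈ 𝓜_R : p ∈ M} if p ∉ M_t (this collection contains M* and so is nonempty). Then MinW(M_t, ŵ) − MinW(M̃_p, ŵ) < Δ/4. -/
theorem stmt_9 {α : Type*} [Fintype α] [DecidableEq α]
    (𝓜 : Finset (Finset α)) (h𝓜 : ∀ M ∈ 𝓜, M.Nonempty)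
    (w : α → ℝ) (Mstar : Finset α) (hstar : Mstar ∈ 𝓜)
    (hunique : ∀ M ∈ 𝓜, M ≠ Mstar → MinW M w < MinW Mstar w)
    (A R : Finset α) (hA : A ⊆ Mstar) (hR : R ∩ Mstar = ∅)
    (Δ : ℝ) (hΔ : 0 < Δ) (what : α → ℝ)
    (hw1 : ∀ i, i ∉ A ∪ R → |what i - w i| < Δ / 8)
    (hw2 : ∀ i ∈ A, w i ≤ what i)
    (Mt : Finset α) (hMt1 : Mt ∈ 𝓜) (hMt2 : Mt ∩ R = ∅)
    (hMtmax : ∀ M ∈ 𝓜, M ∩ R = ∅ → MinW M what ≤ MinW Mt what)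
    (p : α) (hp : p ∉ A ∪ R)
    (hsym : (p ∈ Mstar ∧ p ∉ Mt) ∨ (p ∈ Mt ∧ p ∉ Mstar))
    -- `M̃_p` is a maximizer of `MinW (·, ŵ)` over the constrained collection
    (Mtp : Finset α) (hMtp1 : Mtp ∈ 𝓜) (hMtp2 : Mtp ∩ R = ∅)
    (hMtp3 : if p ∈ Mt then p ∉ Mtp else p ∈ Mtp)
    (hMtpmax : ∀ M ∈ 𝓜, M ∩ R = ∅ → (if p ∈ Mt then p ∉ M else p ∈ M) →
      MinW M what ≤ MinW Mtp what) :
    MinW Mt what - MinW Mtp what < Δ / 4 := by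
  have hMs : Mstar.Nonempty := h𝓜 _ hstar
  have hMtne : Mt.Nonempty := h𝓜 _ hMt1
  have hMtpne : Mtp.Nonempty := h𝓜 _ hMtp1
  have hMinWs : MinW Mstar w = Mstar.inf' hMs w := by simp [MinW, hMs]
  set OPT := MinW Mstar w with hOPT
  -- every element of Mstar has w ≥ OPT
  have hwge : ∀ i ∈ Mstar, OPT ≤ w i := by
    intro i hi
    rw [hOPT]
    simp only [MinW, hMs, dif_pos]
    exact Finset.inf'_le _ hi
  -- Mt ≠ Mstar
  have hne : Mt ≠ Mstar := by
    rcases hsym with ⟨h1, h2⟩ | ⟨h1, h2⟩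
    · intro h; exact h2 (h ▸ h1)
    · intro h; exact h2 (h ▸ h1)
  have hlt : MinW Mt w < OPT := hunique Mt hMt1 hne
  -- minimizer e of Mt under w
  obtain ⟨e, he, hew⟩ := Finset.exists_mem_eq_inf' hMtne w
  have hMinWt : MinW Mt w = w e := by simp [MinW, hMtne, hew]
  have hewlt : w e < OPT := hMinWt ▸ hlt
  have heA : e ∉ A := fun h => absurd hewlt (not_lt.2 (hwge e (hA h)))
  have heR : e ∉ R := fun h => by
    have : e ∈ Mt ∩ R := Finset.mem_inter.2 ⟨he, h⟩
    rw [hMt2] at this; exact absurd this (Finset.notMem_empty e)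
  have heAR : e ∉ A ∪ R := by simp [heA, heR]
  have habs := hw1 e heAR
  have h1 : what e < w e + Δ / 8 := by
    have := abs_lt.1 habs; linarith [this.1, this.2]
  -- upper bound on MinW Mt ŵ
  have hub : MinW Mt what < OPT + Δ / 8 := by
    have hle : MinW Mt what ≤ what e := by
      simp only [MinW, hMtne, dif_pos]; exact Finset.inf'_le _ he
    linarith
  -- lower bound: MinW Mstar ŵ > OPT - Δ/8
  have hlb : OPT - Δ / 8 < MinW Mstar what := by
    simp only [MinW, hMs, dif_pos]
    rw [Finset.lt_inf'_iff]
    intro i hi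
    have hiR : i ∉ R := fun h => by
      have : i ∈ R ∩ Mstar := Finset.mem_inter.2 ⟨h, hi⟩
      rw [hR] at this; exact absurd this (Finset.notMem_empty i)
    by_cases hiA : i ∈ A
    · have := hw2 i hiA
      linarith [hwge i hi]
    · have hiAR : i ∉ A ∪ R := by simp [hiA, hiR]
      have := abs_lt.1 (hw1 i hiAR)
      linarith [hwge i hi, this.1]
  -- Mstar satisfies the constraint
  have hcond : if p ∈ Mt then p ∉ Mstar else p ∈ Mstar := by
    rcases hsym with ⟨h1, h2⟩ | ⟨h1, h2⟩
    · simp [h2, h1]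
    · simp [h1, h2]
  have hMsR : Mstar ∩ R = ∅ := by rwa [Finset.inter_comm]
  have hge : MinW Mstar what ≤ MinW Mtp what := hMtpmax Mstar hstar hMsR hcond
  linarith
end

section
/- Under the stated setup, let U = [n] \ (A ∪ R); for each i ∈ U let M̃_i be a maximizer of MinW(·, ŵ) over {M ∈ 𝓜_R : i ∉ M} if i ∈ M_t and over {M ∈ 𝓜_R : i ∈ M} if i ∉ M_t (with the bottleneck value over an empty collection taken to be −∞), and define g(i) = MinW(M_t, ŵ) − MinW(M̃_i, ŵ) (so g(i) = +∞ when the respective collection is empty). If some e ∈ U satisfies Δ^B_e ≥ Δ, then every maximizer p of g over U satisfies: p ∈ M* if and only if p ∈ M_t. -/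
open scoped Classical in
theorem stmt_10 {α : Type*} [Fintype α] [DecidableEq α]
    (𝓜 : Finset (Finset α)) (h𝓜 : ∀ M ∈ 𝓜, M.Nonempty)
    (w : α → ℝ) (Mstar : Finset α) (hstar : Mstar ∈ 𝓜)
    (hunique : ∀ M ∈ 𝓜, M ≠ Mstar → MinW M w < MinW Mstar w)
    (A R : Finset α) (hA : A ⊆ Mstar) (hR : R ∩ Mstar = ∅)
    (Δ : ℝ) (hΔ : 0 < Δ) (what : α → ℝ)
    (hw1 : ∀ i, i ∉ A ∪ R → |what i - w i| < Δ / 8)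
    (hw2 : ∀ i ∈ A, w i ≤ what i)
    (Mt : Finset α) (hMt1 : Mt ∈ 𝓜) (hMt2 : Mt ∩ R = ∅)
    (hMtmax : ∀ M ∈ 𝓜, M ∩ R = ∅ → MinW M what ≤ MinW Mt what)
    (U : Finset α) (hU : U = Finset.univ \ (A ∪ R))
    -- the empirical gap `g i = MinW (M_t, ŵ) - MinW (M̃_i, ŵ)`, in the extended reals,
    -- where the bottleneck value over an empty collection is `⊥ = -∞`
    (g : α → EReal)
    (hg : ∀ i, g i = (MinW Mt what : EReal) -
      ((𝓜.filter (fun M => M ∩ R = ∅ ∧ (if i ∈ Mt then i ∉ M else i ∈ M))).sup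
        (fun M => ((MinW M what : ℝ) : EReal))))
    -- some undetermined base arm `e` has `Δ^B_e ≥ Δ`
    (hex : ∃ e ∈ U,
      (e ∈ Mstar →
        (∃ M ∈ 𝓜, e ∉ M) ∧ ∀ M ∈ 𝓜, e ∉ M → MinW M w + Δ ≤ MinW Mstar w) ∧
      (e ∉ Mstar →
        (∃ M ∈ 𝓜, e ∈ M) ∧ ∀ M ∈ 𝓜, e ∈ M → MinW M w + Δ ≤ MinW Mstar w))
    (p : α) (hp : p ∈ U) (hpmax : ∀ i ∈ U, g i ≤ g p) :
    p ∈ Mstar ↔ p ∈ Mt := by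
  classical
  obtain ⟨e, heU, he1, he2⟩ := hex
  set ε := Δ / 8 with hεdef
  have hε0 : 0 < ε := by positivity
  set OPT := MinW Mstar w with hOPTdef
  have hMsNe : Mstar.Nonempty := h𝓜 _ hstar
  have hMtNe : Mt.Nonempty := h𝓜 _ hMt1
  -- every element of Mstar has weight at least OPT
  have hOPTle : ∀ i ∈ Mstar, OPT ≤ w i := by
    intro i hi
    rw [hOPTdef, MinW, dif_pos hMsNe]
    exact Finset.inf'_le _ hi
  -- a generic helper: membership in M with M ∩ R = ∅ implies not in R
  have hnotR : ∀ (M : Finset α), M ∩ R = ∅ → ∀ j ∈ M, j ∉ R := by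
    intro M hMR j hjM hjR
    have : j ∈ M ∩ R := Finset.mem_inter.mpr ⟨hjM, hjR⟩
    rw [hMR] at this
    exact absurd this (Finset.notMem_empty j)
  have hRMs : Mstar ∩ R = ∅ := by
    rw [Finset.inter_comm]; exact hR
  -- L1: lower bound for MinW under what
  have L1 : ∀ M : Finset α, (hne : M.Nonempty) → M ∩ R = ∅ →
      MinW M w - ε ≤ MinW M what := by
    intro M hne hMR
    obtain ⟨j, hjM, hj⟩ := Finset.exists_mem_eq_inf' hne what
    have h1 : MinW M w ≤ w j := by
      rw [MinW, dif_pos hne]; exact Finset.inf'_le _ hjM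
    have h2 : MinW M what = what j := by rw [MinW, dif_pos hne]; exact hj
    have hjR : j ∉ R := hnotR M hMR j hjM
    by_cases hjA : j ∈ A
    · have := hw2 j hjA
      rw [h2]; linarith
    · have hju : j ∉ A ∪ R := by
        simp [Finset.mem_union, hjA, hjR]
      have := abs_lt.mp (hw1 j hju)
      rw [h2]; rw [hεdef]; linarith [this.1]
  -- L2: upper bound for MinW under what, for suboptimal M
  have L2 : ∀ M ∈ 𝓜, M ∩ R = ∅ → M ≠ Mstar → MinW M what < MinW M w + ε := by
    intro M hM hMR hne
    have hMne : M.Nonempty := h𝓜 M hM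
    obtain ⟨j, hjM, hj⟩ := Finset.exists_mem_eq_inf' hMne w
    have h1 : MinW M w = w j := by rw [MinW, dif_pos hMne]; exact hj
    have h2 : MinW M what ≤ what j := by
      rw [MinW, dif_pos hMne]; exact Finset.inf'_le _ hjM
    have hjR : j ∉ R := hnotR M hMR j hjM
    have hjA : j ∉ A := by
      intro hjA
      have hOPT := hOPTle j (hA hjA)
      have := hunique M hM hne
      rw [h1] at this
      linarith
    have hju : j ∉ A ∪ R := by simp [Finset.mem_union, hjA, hjR]
    have := abs_lt.mp (hw1 j hju)
    rw [hεdef] at *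
    linarith [this.2]
  have hMs_hat : OPT - ε ≤ MinW Mstar what := L1 Mstar hMsNe hRMs
  have ha_lb : OPT - ε ≤ MinW Mt what :=
    le_trans hMs_hat (hMtmax Mstar hstar hRMs)
  -- e is classified correctly
  have he_iff : e ∈ Mstar ↔ e ∈ Mt := by
    constructor
    · intro heS
      by_contra heT
      have hne : Mt ≠ Mstar := fun h => heT (h ▸ heS)
      have h1 := L2 Mt hMt1 hMt2 hne
      have h2 := (he1 heS).2 Mt hMt1 heT
      rw [hεdef] at *
      linarith
    · intro heT
      by_contra heS
      have hne : Mt ≠ Mstar := fun h => heS (h ▸ heT)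
      have h1 := L2 Mt hMt1 hMt2 hne
      have h2 := (he2 heS).2 Mt hMt1 heT
      rw [hεdef] at *
      linarith
  -- lower bound on g e
  have hSe : ((𝓜.filter (fun M => M ∩ R = ∅ ∧ (if e ∈ Mt then e ∉ M else e ∈ M))).sup
        (fun M => ((MinW M what : ℝ) : EReal))) ≤ ((OPT - Δ + ε : ℝ) : EReal) := by
    apply Finset.sup_le
    intro M hM
    rw [Finset.mem_filter] at hM
    obtain ⟨hM𝓜, hMR', hcond⟩ := hM
    rw [EReal.coe_le_coe_iff]
    by_cases heT : e ∈ Mt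
    · rw [if_pos heT] at hcond
      have heS : e ∈ Mstar := he_iff.mpr heT
      have hne : M ≠ Mstar := fun h => hcond (h ▸ heS)
      have h1 := L2 M hM𝓜 hMR' hne
      have h2 := (he1 heS).2 M hM𝓜 hcond
      linarith
    · rw [if_neg heT] at hcond
      have heS : e ∉ Mstar := fun h => heT (he_iff.mp h)
      have hne : M ≠ Mstar := fun h => heS (h ▸ hcond)
      have h1 := L2 M hM𝓜 hMR' hne
      have h2 := (he2 heS).2 M hM𝓜 hcond
      linarith
  have hge : (((OPT - ε) - (OPT - Δ + ε) : ℝ) : EReal) ≤ g e := by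
    rw [hg e, EReal.coe_sub]
    exact EReal.sub_le_sub (EReal.coe_le_coe_iff.mpr ha_lb) hSe
  -- main conclusion by contradiction
  by_contra hcontra
  -- in the mismatch case, Mstar belongs to the filtered family for p
  have hstarfilter : Mstar ∈ 𝓜.filter
      (fun M => M ∩ R = ∅ ∧ (if p ∈ Mt then p ∉ M else p ∈ M)) := by
    rw [Finset.mem_filter]
    refine ⟨hstar, hRMs, ?_⟩
    by_cases hpT : p ∈ Mt
    · rw [if_pos hpT]
      intro hpS
      exact hcontra ⟨fun _ => hpT, fun _ => hpS⟩
    · rw [if_neg hpT]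
      by_contra hpS
      exact hcontra ⟨fun h => absurd h hpS, fun h => absurd h hpT⟩
  have hMtne : Mt ≠ Mstar := by
    intro h
    subst h
    exact hcontra Iff.rfl
  have ha_ub : MinW Mt what ≤ OPT + ε := by
    have h1 := L2 Mt hMt1 hMt2 hMtne
    have h2 := hunique Mt hMt1 hMtne
    linarith
  have hSp : ((OPT - ε : ℝ) : EReal) ≤
      ((𝓜.filter (fun M => M ∩ R = ∅ ∧ (if p ∈ Mt then p ∉ M else p ∈ M))).sup
        (fun M => ((MinW M what : ℝ) : EReal))) := by
    refine le_trans ?_ (Finset.le_sup (f := fun M => ((MinW M what : ℝ) : EReal)) hstarfilter)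
    exact EReal.coe_le_coe_iff.mpr hMs_hat
  have hgp : g p ≤ (((OPT + ε) - (OPT - ε) : ℝ) : EReal) := by
    rw [hg p, EReal.coe_sub]
    exact EReal.sub_le_sub (EReal.coe_le_coe_iff.mpr ha_ub) hSp
  have hchain : (((OPT - ε) - (OPT - Δ + ε) : ℝ) : EReal) ≤
      (((OPT + ε) - (OPT - ε) : ℝ) : EReal) :=
    le_trans hge (le_trans (hpmax e heU) hgp)
  rw [EReal.coe_le_coe_iff] at hchain
  rw [hεdef] at hchain
  linarith
end

section
/- For all natural numbers n ≥ 1 and T ≥ n, letting H_n = Σ_{i=1}^{n} 1/i, we have Σ_{t=1}^{n} ⌈(T − n)/(H_n · (n − t + 1))⌉ ≤ T, where ⌈·⌉ denotes the ceiling of a real number. -/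
theorem stmt_11 (n T : ℕ) (hn : 1 ≤ n) (hT : n ≤ T) :
    ∑ t ∈ Finset.Icc 1 n,
      ⌈((T : ℝ) - (n : ℝ)) /
        ((∑ i ∈ Finset.Icc 1 n, (1 : ℝ) / (i : ℝ)) * ((n : ℝ) - (t : ℝ) + 1))⌉₊ ≤ T := by
  set H : ℝ := ∑ i ∈ Finset.Icc 1 n, (1 : ℝ) / (i : ℝ) with hH
  have hHpos : 0 < H := by
    rw [hH]
    apply Finset.sum_pos
    · intro i hi
      simp only [Finset.mem_Icc] at hi
      have : (0:ℝ) < i := by exact_mod_cast Nat.lt_of_lt_of_le Nat.zero_lt_one hi.1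
      positivity
    · exact ⟨1, by simp [hn]⟩
  have hden : ∀ t ∈ Finset.Icc 1 n, (0:ℝ) < (n : ℝ) - (t : ℝ) + 1 := by
    intro t ht
    simp only [Finset.mem_Icc] at ht
    have : (t:ℝ) ≤ n := by exact_mod_cast ht.2
    linarith
  have hTn : (0:ℝ) ≤ (T:ℝ) - n := by
    have : (n:ℝ) ≤ T := by exact_mod_cast hT
    linarith
  have hre : ∑ t ∈ Finset.Icc 1 n, (1:ℝ)/((n:ℝ)-(t:ℝ)+1) = H := by
    rw [hH]
    apply Finset.sum_nbij' (i := fun t => n+1-t) (j := fun i => n+1-i)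
    · intro a ha; simp only [Finset.mem_Icc] at *; omega
    · intro a ha; simp only [Finset.mem_Icc] at *; omega
    · intro a ha; simp only [Finset.mem_Icc] at *; omega
    · intro a ha; simp only [Finset.mem_Icc] at *; omega
    · intro a ha
      simp only [Finset.mem_Icc] at ha
      have h1 : ((n+1-a : ℕ) : ℝ) = (n:ℝ) - a + 1 := by
        have : a ≤ n + 1 := by omega
        push_cast [Nat.cast_sub this]
        ring
      rw [h1]
  have key : (↑(∑ t ∈ Finset.Icc 1 n,
      ⌈((T : ℝ) - (n : ℝ)) / (H * ((n : ℝ) - (t : ℝ) + 1))⌉₊) : ℝ) < T := by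
    push_cast
    have h1 : ∀ t ∈ Finset.Icc 1 n,
        (⌈((T : ℝ) - (n : ℝ)) / (H * ((n : ℝ) - (t : ℝ) + 1))⌉₊ : ℝ) <
          ((T : ℝ) - (n : ℝ)) / (H * ((n : ℝ) - (t : ℝ) + 1)) + 1 := by
      intro t ht
      apply Nat.ceil_lt_add_one
      have := hden t ht
      positivity
    calc (∑ t ∈ Finset.Icc 1 n,
        (⌈((T : ℝ) - (n : ℝ)) / (H * ((n : ℝ) - (t : ℝ) + 1))⌉₊ : ℝ))
        < ∑ t ∈ Finset.Icc 1 n,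
            (((T : ℝ) - (n : ℝ)) / (H * ((n : ℝ) - (t : ℝ) + 1)) + 1) := by
          apply Finset.sum_lt_sum_of_nonempty ⟨1, by simp [hn]⟩ h1
      _ = (∑ t ∈ Finset.Icc 1 n,
            ((T : ℝ) - (n : ℝ)) / (H * ((n : ℝ) - (t : ℝ) + 1))) + n := by
          rw [Finset.sum_add_distrib]
          simp [Nat.card_Icc, hn]
      _ = ((T : ℝ) - (n : ℝ)) / H *
            (∑ t ∈ Finset.Icc 1 n, (1:ℝ)/((n:ℝ)-(t:ℝ)+1)) + n := by
          rw [Finset.mul_sum]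
          congr 1
          apply Finset.sum_congr rfl
          intro t ht
          have := hden t ht
          field_simp
      _ = (T:ℝ) := by
          rw [hre]
          field_simp
          ring
  exact_mod_cast key.le
end

section
/- Let G be a simple graph on a finite vertex set V containing four pairwise distinct vertices s, t, u, v with u adjacent to v in G. Let G' be the simple graph on V together with two new vertices w and z, whose adjacency agrees with that of G on V except that u and v are not adjacent in G' and s and t are not adjacent in G', and additionally u ~ w, w ~ v, s ~ z, and z ~ t in G'. Then G contains a simple path from s to t that traverses the edge {u, v} if and only if G' contains two simple paths from w to z that are internally vertex-disjoint, i.e., they share no vertices other than w and z. -/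
open SimpleGraph Walk

private lemma lift_walk {V : Type*} {G : SimpleGraph V} {G' : SimpleGraph (V ⊕ Fin 2)}
    {u v s t : V}
    (hA : ∀ c d : V, G.Adj c d → s(c, d) ≠ s(u, v) → s(c, d) ≠ s(s, t) →
      G'.Adj (Sum.inl c) (Sum.inl d))
    {a b : V} (p : G.Walk a b) (h1 : s(u, v) ∉ p.edges) (h2 : s(s, t) ∉ p.edges) :
    ∃ q : G'.Walk (Sum.inl a) (Sum.inl b), q.support = p.support.map Sum.inl := by
  induction p with
  | nil => exact ⟨Walk.nil, by simp⟩
  | cons h p ih =>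
    rw [Walk.edges_cons] at h1 h2
    simp only [List.mem_cons, not_or] at h1 h2
    obtain ⟨q, hq⟩ := ih h1.2 h2.2
    exact ⟨Walk.cons (hA _ _ h (fun hc => h1.1 hc.symm) (fun hc => h2.1 hc.symm)) q,
      by simp [hq]⟩

private lemma proj_walk {V : Type*} {G : SimpleGraph V} {G' : SimpleGraph (V ⊕ Fin 2)}
    (hA : ∀ c d : V, G'.Adj (Sum.inl c) (Sum.inl d) → G.Adj c d)
    : ∀ (x y : V ⊕ Fin 2) (r : G'.Walk x y),
      Sum.inr 0 ∉ r.support → Sum.inr 1 ∉ r.support →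
      ∃ (a b : V) (p : G.Walk a b), x = Sum.inl a ∧ y = Sum.inl b ∧
        r.support = p.support.map Sum.inl := by
  intro x y r
  induction r with
  | @nil x =>
    intro h0 h1
    cases x with
    | inr i =>
      fin_cases i
      · exact absurd (by simp) h0
      · exact absurd (by simp) h1
    | inl a => exact ⟨a, a, Walk.nil, rfl, rfl, by simp⟩
  | @cons x y' _ h r ih =>
    intro h0 h1
    rw [Walk.support_cons] at h0 h1
    obtain ⟨a', b, p', rfl, rfl, hp'⟩ := ih (fun hc => h0 (List.mem_cons_of_mem _ hc))
      (fun hc => h1 (List.mem_cons_of_mem _ hc))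
    cases x with
    | inr i =>
      fin_cases i
      · exact absurd List.mem_cons_self h0
      · exact absurd List.mem_cons_self h1
    | inl a =>
      exact ⟨a, b, Walk.cons (hA _ _ h) p', rfl, rfl, by simp [hp']⟩

private lemma extract_path {V : Type*} {G : SimpleGraph V} {G' : SimpleGraph (V ⊕ Fin 2)}
    {u v s t : V}
    (hA : ∀ c d : V, G'.Adj (Sum.inl c) (Sum.inl d) → G.Adj c d)
    (hW : ∀ x, G'.Adj (Sum.inr 0) x → x = Sum.inl u ∨ x = Sum.inl v)
    (hZ : ∀ x, G'.Adj x (Sum.inr 1) → x = Sum.inl s ∨ x = Sum.inl t)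
    (q : G'.Walk (Sum.inr 0) (Sum.inr 1)) (hq : q.IsPath) :
    ∃ (a b : V) (p : G.Walk a b), (a = u ∨ a = v) ∧ (b = s ∨ b = t) ∧ p.IsPath ∧
      q.support = Sum.inr 0 :: (p.support.map Sum.inl ++ [Sum.inr 1]) := by
  obtain ⟨x, hwx, q', hq'⟩ := Walk.exists_eq_cons_of_ne (by simp) q
  have hxa := hW x hwx
  have hx1 : (Sum.inr 1 : V ⊕ Fin 2) ≠ x := by
    rcases hxa with rfl | rfl <;> simp
  obtain ⟨y, hzy, r, hr⟩ := Walk.exists_eq_cons_of_ne hx1 q'.reverse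
  have hyb := hZ y hzy.symm
  rw [hq'] at hq
  rw [Walk.cons_isPath_iff] at hq
  have hq'p : q'.IsPath := hq.1
  have h0q' : Sum.inr 0 ∉ q'.support := hq.2
  have hrev : q'.reverse.IsPath := hq'p.reverse
  rw [hr, Walk.cons_isPath_iff] at hrev
  have h1r : Sum.inr 1 ∉ r.support := hrev.2
  have h0r : Sum.inr 0 ∉ r.support := by
    intro hc
    apply h0q'
    have : Sum.inr 0 ∈ q'.reverse.support := by
      rw [hr, Walk.support_cons]; exact List.mem_cons_of_mem _ hc
    rwa [Walk.support_reverse, List.mem_reverse] at this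
  obtain ⟨b, a, p', hy, hx, hsup⟩ := proj_walk hA y x r h0r h1r
  subst hy hx
  have hpath : p'.reverse.IsPath := by
    rw [Walk.isPath_def, Walk.support_reverse, List.nodup_reverse]
    exact (List.Nodup.of_map _) (hsup ▸ hrev.1.support_nodup)
  refine ⟨a, b, p'.reverse, ?_, ?_, hpath, ?_⟩
  · rcases hxa with h | h <;> [left; right] <;> exact Sum.inl.inj h
  · rcases hyb with h | h <;> [left; right] <;> exact Sum.inl.inj h
  · have hq's : q'.support = List.map Sum.inl p'.reverse.support ++ [Sum.inr 1] := by
      have : q'.support = q'.reverse.support.reverse := by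
        rw [Walk.support_reverse, List.reverse_reverse]
      rw [this, hr, Walk.support_cons, List.reverse_cons, hsup, Walk.support_reverse,
        List.map_reverse]
    rw [hq', Walk.support_cons, hq's]

private lemma split_at_edge {V : Type*} [DecidableEq V] {G : SimpleGraph V} {s t u v : V}
    (hadj : G.Adj u v) (hus : u ≠ s) (hut : u ≠ t)
    (p : G.Walk s t) (hp : p.IsPath) (he : s(u, v) ∈ p.edges) :
    (∃ (p₁ : G.Walk s u) (p₂ : G.Walk v t), p = p₁.append (Walk.cons hadj p₂)) ∨
    (∃ (p₁ : G.Walk s v) (p₂ : G.Walk u t), p = p₁.append (Walk.cons hadj.symm p₂)) := by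
  have hu : u ∈ p.support := p.fst_mem_support_of_mem_edges he
  have hspec := p.take_spec hu
  have he' : s(u, v) ∈ (p.takeUntil u hu).edges ∨ s(u, v) ∈ (p.dropUntil u hu).edges := by
    rw [← List.mem_append, ← Walk.edges_append, hspec]; exact he
  rcases he' with he1 | he2
  · right
    have hpath1 : (p.takeUntil u hu).reverse.IsPath := by
      rw [← hspec] at hp
      exact hp.of_append_left.reverse
    obtain ⟨x, hux, p₄, hcons⟩ := Walk.exists_eq_cons_of_ne hus (p.takeUntil u hu).reverse
    have he1' : s(u, v) ∈ (p.takeUntil u hu).reverse.edges := by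
      rw [Walk.edges_reverse, List.mem_reverse]; exact he1
    rw [hcons] at he1' hpath1
    rw [Walk.edges_cons, List.mem_cons] at he1'
    rcases he1' with heq | hmem
    · have hxv : x = v := (Sym2.congr_right.mp heq.symm)
      subst hxv
      refine ⟨p₄.reverse, p.dropUntil u hu, ?_⟩
      have h2 : p.takeUntil u hu = (Walk.cons hux p₄).reverse := by
        rw [← hcons, Walk.reverse_reverse]
      conv_lhs => rw [← hspec, h2, Walk.reverse_cons]
      rw [← Walk.append_assoc, Walk.cons_append, Walk.nil_append]
    · exact absurd (p₄.fst_mem_support_of_mem_edges hmem)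
        ((Walk.cons_isPath_iff _ _).mp hpath1).2
  · left
    have hpath2 : (p.dropUntil u hu).IsPath := by
      rw [← hspec] at hp
      exact hp.of_append_right
    obtain ⟨x, hux, p₃, hcons⟩ := Walk.exists_eq_cons_of_ne hut (p.dropUntil u hu)
    rw [hcons] at he2 hpath2
    rw [Walk.edges_cons, List.mem_cons] at he2
    rcases he2 with heq | hmem
    · have hxv : x = v := (Sym2.congr_right.mp heq.symm)
      subst hxv
      refine ⟨p.takeUntil u hu, p₃, ?_⟩
      conv_lhs => rw [← hspec, hcons]
    · exact absurd (p₃.fst_mem_support_of_mem_edges hmem)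
        ((Walk.cons_isPath_iff _ _).mp hpath2).2

theorem stmt_14 {V : Type*} [Fintype V] [DecidableEq V]
    (G : SimpleGraph V) (s t u v : V)
    (hst : s ≠ t) (hsu : s ≠ u) (hsv : s ≠ v)
    (htu : t ≠ u) (htv : t ≠ v) (huv : u ≠ v)
    (hadj : G.Adj u v)
    -- `G'` adds two new vertices `w = Sum.inr 0` and `z = Sum.inr 1`; it agrees
    -- with `G` on `V` except that `u, v` and `s, t` are no longer adjacent, and
    -- additionally `u ~ w`, `w ~ v`, `s ~ z`, `z ~ t`.
    (G' : SimpleGraph (V ⊕ Fin 2))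
    (hG' : G' = SimpleGraph.fromRel (fun x y =>
      match x, y with
      | Sum.inl a, Sum.inl b =>
          G.Adj a b ∧ ¬(a = u ∧ b = v) ∧ ¬(a = v ∧ b = u) ∧
            ¬(a = s ∧ b = t) ∧ ¬(a = t ∧ b = s)
      | Sum.inl a, Sum.inr i =>
          (i = 0 ∧ (a = u ∨ a = v)) ∨ (i = 1 ∧ (a = s ∨ a = t))
      | _, _ => False)) :
    -- `G` has a simple `s`–`t` path traversing the edge `{u, v}` iff `G'` has two
    -- internally vertex-disjoint simple paths from `w` to `z`.
    (∃ p : G.Walk s t, p.IsPath ∧ Sym2.mk u v ∈ p.edges) ↔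
    (∃ q₁ q₂ : G'.Walk (Sum.inr 0) (Sum.inr 1),
      q₁.IsPath ∧ q₂.IsPath ∧
      ∀ x, x ∈ q₁.support → x ∈ q₂.support →
        x = Sum.inr 0 ∨ x = Sum.inr 1) := by
  subst hG'
  set G' : SimpleGraph (V ⊕ Fin 2) := SimpleGraph.fromRel (fun x y =>
      match x, y with
      | Sum.inl a, Sum.inl b =>
          G.Adj a b ∧ ¬(a = u ∧ b = v) ∧ ¬(a = v ∧ b = u) ∧
            ¬(a = s ∧ b = t) ∧ ¬(a = t ∧ b = s)
      | Sum.inl a, Sum.inr i =>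
          (i = 0 ∧ (a = u ∨ a = v)) ∨ (i = 1 ∧ (a = s ∨ a = t))
      | _, _ => False) with hG'def
  have hA : ∀ c d : V, G'.Adj (Sum.inl c) (Sum.inl d) → G.Adj c d := by
    intro c d h
    rw [hG'def, SimpleGraph.fromRel_adj] at h
    rcases h.2 with ⟨h', _⟩ | ⟨h', _⟩
    exacts [h', h'.symm]
  have hW : ∀ x, G'.Adj (Sum.inr 0) x → x = Sum.inl u ∨ x = Sum.inl v := by
    intro x h
    rw [hG'def, SimpleGraph.fromRel_adj] at h
    cases x with
    | inl a =>
      rcases h.2 with h' | h'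
      · exact absurd h' not_false
      · rcases h' with ⟨_, h'⟩ | ⟨h0, _⟩
        · rcases h' with rfl | rfl
          · exact Or.inl rfl
          · exact Or.inr rfl
        · exact absurd h0 (by decide)
    | inr i =>
      rcases h.2 with h' | h' <;> exact absurd h' not_false
  have hZ : ∀ x, G'.Adj x (Sum.inr 1) → x = Sum.inl s ∨ x = Sum.inl t := by
    intro x h
    rw [hG'def, SimpleGraph.fromRel_adj] at h
    cases x with
    | inl a =>
      rcases h.2 with h' | h'
      · rcases h' with ⟨h0, _⟩ | ⟨_, h'⟩
        · exact absurd h0 (by decide)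
        · rcases h' with rfl | rfl
          · exact Or.inl rfl
          · exact Or.inr rfl
      · exact absurd h' not_false
    | inr i =>
      rcases h.2 with h' | h' <;> exact absurd h' not_false
  have hwu : G'.Adj (Sum.inr 0) (Sum.inl u) := by
    rw [hG'def, SimpleGraph.fromRel_adj]
    exact ⟨by simp, Or.inr (Or.inl ⟨rfl, Or.inl rfl⟩)⟩
  have hwv : G'.Adj (Sum.inr 0) (Sum.inl v) := by
    rw [hG'def, SimpleGraph.fromRel_adj]
    exact ⟨by simp, Or.inr (Or.inl ⟨rfl, Or.inr rfl⟩)⟩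
  have hsz : G'.Adj (Sum.inl s) (Sum.inr 1) := by
    rw [hG'def, SimpleGraph.fromRel_adj]
    exact ⟨by simp, Or.inl (Or.inr ⟨rfl, Or.inl rfl⟩)⟩
  have htz : G'.Adj (Sum.inl t) (Sum.inr 1) := by
    rw [hG'def, SimpleGraph.fromRel_adj]
    exact ⟨by simp, Or.inl (Or.inr ⟨rfl, Or.inr rfl⟩)⟩
  have hA' : ∀ c d : V, G.Adj c d → s(c, d) ≠ s(u, v) → s(c, d) ≠ s(s, t) →
      G'.Adj (Sum.inl c) (Sum.inl d) := by
    intro c d h h1 h2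
    rw [hG'def, SimpleGraph.fromRel_adj]
    refine ⟨by simpa using h.ne, Or.inl ⟨h, ?_, ?_, ?_, ?_⟩⟩
    · rintro ⟨rfl, rfl⟩; exact h1 rfl
    · rintro ⟨rfl, rfl⟩; exact h1 (Sym2.eq_swap)
    · rintro ⟨rfl, rfl⟩; exact h2 rfl
    · rintro ⟨rfl, rfl⟩; exact h2 (Sym2.eq_swap)
  constructor
  · -- forward direction
    rintro ⟨p, hp, he⟩
    -- a helper that builds the two disjoint paths from a split of `p`
    have build : ∀ (a b : V) (pa : G.Walk a s) (pb : G.Walk b t),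
        G'.Adj (Sum.inr 0) (Sum.inl a) → G'.Adj (Sum.inr 0) (Sum.inl b) →
        (pa.support.reverse ++ pb.support).Nodup →
        s(u, v) ∉ pa.edges → s(s, t) ∉ pa.edges →
        s(u, v) ∉ pb.edges → s(s, t) ∉ pb.edges →
        (∃ q₁ q₂ : G'.Walk (Sum.inr 0) (Sum.inr 1),
          q₁.IsPath ∧ q₂.IsPath ∧
          ∀ x, x ∈ q₁.support → x ∈ q₂.support →
            x = Sum.inr 0 ∨ x = Sum.inr 1) := by
      intro a b pa pb hwa hwb hnd e1 e2 e3 e4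
      have hnd1 : pa.support.Nodup := by
        have := hnd.of_append_left
        rwa [List.nodup_reverse] at this
      have hnd2 : pb.support.Nodup := hnd.of_append_right
      have hdisj := List.disjoint_of_nodup_append hnd
      obtain ⟨qa, hqa⟩ := lift_walk hA' pa e1 e2
      obtain ⟨qb, hqb⟩ := lift_walk hA' pb e3 e4
      refine ⟨Walk.cons hwa (qa.append (Walk.cons hsz Walk.nil)),
             Walk.cons hwb (qb.append (Walk.cons htz Walk.nil)), ?_, ?_, ?_⟩
      · rw [Walk.isPath_def, Walk.support_cons, Walk.support_append, hqa]
        simp only [Walk.support_cons, Walk.support_nil, List.tail_cons]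
        rw [List.nodup_cons, List.nodup_append]
        refine ⟨by simp, (hnd1.map Sum.inl_injective), by simp, by simp⟩
      · rw [Walk.isPath_def, Walk.support_cons, Walk.support_append, hqb]
        simp only [Walk.support_cons, Walk.support_nil, List.tail_cons]
        rw [List.nodup_cons, List.nodup_append]
        refine ⟨by simp, (hnd2.map Sum.inl_injective), by simp, by simp⟩
      · intro x hx1 hx2
        rw [Walk.support_cons, Walk.support_append, hqa] at hx1
        rw [Walk.support_cons, Walk.support_append, hqb] at hx2
        simp only [Walk.support_cons, Walk.support_nil, List.tail_cons, List.mem_cons,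
          List.mem_append, List.mem_map, List.mem_singleton] at hx1 hx2
        rcases hx1 with h | ⟨⟨c, hc, rfl⟩ | h | h⟩
        · exact Or.inl h
        · rcases hx2 with h' | ⟨⟨d, hd, hd'⟩ | h' | h'⟩
          · exact absurd h' (by simp)
          · obtain rfl : d = c := Sum.inl_injective hd'
            exact absurd hd (hdisj (by rwa [List.mem_reverse]) ·)
          · exact absurd h' (by simp)
          · exact absurd h' List.not_mem_nil
        · exact Or.inr h
        · exact absurd h List.not_mem_nil
    rcases split_at_edge hadj hsu.symm htu.symm p hp he with ⟨p₁, p₂, rfl⟩ | ⟨p₁, p₂, rfl⟩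
    · -- p = p₁ (s→u) ++ uv ++ p₂ (v→t)
      have hnd : (p₁.support ++ p₂.support).Nodup := by
        have := hp.support_nodup
        rwa [Walk.support_append, Walk.support_cons, List.tail_cons] at this
      have hdisj := List.disjoint_of_nodup_append hnd
      have e1 : s(u, v) ∉ p₁.edges := fun h =>
        hdisj (p₁.snd_mem_support_of_mem_edges h) p₂.start_mem_support
      have e2 : s(s, t) ∉ p₁.edges := fun h =>
        hdisj (p₁.snd_mem_support_of_mem_edges h) p₂.end_mem_support
      have e3 : s(u, v) ∉ p₂.edges := fun h =>
        hdisj p₁.end_mem_support (p₂.fst_mem_support_of_mem_edges h)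
      have e4 : s(s, t) ∉ p₂.edges := fun h =>
        hdisj p₁.start_mem_support (p₂.fst_mem_support_of_mem_edges h)
      refine build u v p₁.reverse p₂ hwu hwv ?_ (by rwa [Walk.edges_reverse, List.mem_reverse])
        (by rwa [Walk.edges_reverse, List.mem_reverse]) e3 e4
      rwa [Walk.support_reverse, List.reverse_reverse]
    · -- p = p₁ (s→v) ++ vu ++ p₂ (u→t)
      have hnd : (p₁.support ++ p₂.support).Nodup := by
        have := hp.support_nodup
        rwa [Walk.support_append, Walk.support_cons, List.tail_cons] at this
      have hdisj := List.disjoint_of_nodup_append hnd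
      have e1 : s(u, v) ∉ p₁.edges := fun h =>
        hdisj (p₁.fst_mem_support_of_mem_edges h) p₂.start_mem_support
      have e2 : s(s, t) ∉ p₁.edges := fun h =>
        hdisj (p₁.snd_mem_support_of_mem_edges h) p₂.end_mem_support
      have e3 : s(u, v) ∉ p₂.edges := fun h =>
        hdisj p₁.end_mem_support (p₂.snd_mem_support_of_mem_edges h)
      have e4 : s(s, t) ∉ p₂.edges := fun h =>
        hdisj p₁.start_mem_support (p₂.fst_mem_support_of_mem_edges h)
      refine build v u p₁.reverse p₂ hwv hwu ?_ (by rwa [Walk.edges_reverse, List.mem_reverse])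
        (by rwa [Walk.edges_reverse, List.mem_reverse]) e3 e4
      rwa [Walk.support_reverse, List.reverse_reverse]
  · -- backward direction
    rintro ⟨q₁, q₂, h1, h2, hdisj⟩
    obtain ⟨a₁, b₁, p₁, ha₁, hb₁, hp₁, hs₁⟩ := extract_path hA hW hZ q₁ h1
    obtain ⟨a₂, b₂, p₂, ha₂, hb₂, hp₂, hs₂⟩ := extract_path hA hW hZ q₂ h2
    have hdisjp : ∀ c, c ∈ p₁.support → c ∈ p₂.support → False := by
      intro c hc1 hc2
      have := hdisj (Sum.inl c) (by rw [hs₁]; simp [hc1]) (by rw [hs₂]; simp [hc2])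
      rcases this with h | h <;> simp at h
    have hane : a₁ ≠ a₂ := fun h =>
      hdisjp a₁ p₁.start_mem_support (h ▸ p₂.start_mem_support)
    have hbne : b₁ ≠ b₂ := fun h =>
      hdisjp b₁ p₁.end_mem_support (h ▸ p₂.end_mem_support)
    -- generic construction
    have key : ∀ (x y : V) (hxy : G.Adj x y) (P₁ : G.Walk x s) (P₂ : G.Walk y t),
        P₁.IsPath → P₂.IsPath → (∀ c, c ∈ P₁.support → c ∈ P₂.support → False) →
        s(x, y) = s(u, v) →
        ∃ p : G.Walk s t, p.IsPath ∧ Sym2.mk u v ∈ p.edges := by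
      intro x y hxy P₁ P₂ hP₁ hP₂ hD heq
      refine ⟨P₁.reverse.append (Walk.cons hxy P₂), ?_, ?_⟩
      · rw [Walk.isPath_def, Walk.support_append, Walk.support_reverse, Walk.support_cons,
          List.tail_cons]
        exact List.Nodup.append (by rw [List.nodup_reverse]; exact hP₁.support_nodup)
          hP₂.support_nodup (fun c hc => fun hc2 => hD c (List.mem_reverse.mp hc) hc2)
      · rw [Walk.edges_append, Walk.edges_cons]
        exact List.mem_append_right _ (heq ▸ List.mem_cons_self)
    rcases ha₁ with rfl | rfl
    · -- a₁ = u, hence a₂ = v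
      obtain rfl : a₂ = v := by rcases ha₂ with h | h; exacts [absurd h.symm hane, h]
      rcases hb₁ with rfl | rfl
      · obtain rfl : b₂ = t := by rcases hb₂ with h | h; exacts [absurd h.symm hbne, h]
        exact key _ _ hadj p₁ p₂ hp₁ hp₂ hdisjp rfl
      · obtain rfl : b₂ = s := by rcases hb₂ with h | h; exacts [h, absurd h.symm hbne]
        exact key _ _ hadj.symm p₂ p₁ hp₂ hp₁ (fun c h h' => hdisjp c h' h) Sym2.eq_swap
    · -- a₁ = v, hence a₂ = u
      obtain rfl : a₂ = u := by rcases ha₂ with h | h; exacts [h, absurd h.symm hane]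
      rcases hb₁ with rfl | rfl
      · obtain rfl : b₂ = t := by rcases hb₂ with h | h; exacts [absurd h.symm hbne, h]
        exact key _ _ hadj.symm p₁ p₂ hp₁ hp₂ hdisjp Sym2.eq_swap
      · obtain rfl : b₂ = s := by rcases hb₂ with h | h; exacts [h, absurd h.symm hbne]
        exact key _ _ hadj p₂ p₁ hp₂ hp₁ (fun c h h' => hdisjp c h' h) rfl
end
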